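/- Let p, b ∈ ℚ with b ≠ 0 and 3b - 16p^3 ≠ 0, and set a = 6p^2, c = p(4b - 15p^3). Then the point P = (8a, 48b) = (48p^2, 48b) is a point of order exactly 3 on the elliptic curve Y^2 = X^3 - 72(a^2 - 4c)X + 64(a^3 + 36b^2 - 36ac). -/

import Mathlib

theorem stmt_16 (p b : ℚ) (hb : b ≠ 0) (hp : 3*b - 16*p^3 ≠ 0)
    (a c : ℚ) (hac : a = 6*p^2 ∧ c = p*(4*b - 15*p^3)) :
    let W : WeierstrassCurve.Affine ℚ :=
      { a₁ := 0, a₂ := 0, a₃ := 0,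
        a₄ := -72 * (a^2 - 4*c),
        a₆ := 64 * (a^3 + 36*b^2 - 36*a*c) }
    ∃ hP : W.Nonsingular (48*p^2) (48*b),
      addOrderOf (WeierstrassCurve.Affine.Point.some (48*p^2) (48*b) hP : W.Point) = 3 := by
  obtain ⟨ha, hc⟩ := hac
  subst ha hc
  intro W
  have hWa₁ : W.a₁ = 0 := rfl
  have hWa₂ : W.a₂ = 0 := rfl
  have hWa₃ : W.a₃ = 0 := rfl
  have hWa₄ : W.a₄ = -72 * ((6*p^2)^2 - 4*(p*(4*b - 15*p^3))) := rfl
  have hWa₆ : W.a₆ = 64 * ((6*p^2)^3 + 36*b^2 - 36*(6*p^2)*(p*(4*b - 15*p^3))) := rfl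
  have hP : W.Nonsingular (48*p^2) (48*b) := by
    rw [WeierstrassCurve.Affine.nonsingular_iff, WeierstrassCurve.Affine.equation_iff,
      hWa₁, hWa₂, hWa₃, hWa₄, hWa₆]
    constructor
    · ring
    · right
      intro h
      apply hb
      linarith
  refine ⟨hP, ?_⟩
  have hy : (48*b) ≠ W.negY (48*p^2) (48*b) := by
    rw [WeierstrassCurve.Affine.negY, hWa₁, hWa₃]
    intro h
    apply hb
    linarith
  have hL : W.slope (48*p^2) (48*p^2) (48*b) (48*b) = 12*p := by
    rw [WeierstrassCurve.Affine.slope_of_Y_ne rfl hy, WeierstrassCurve.Affine.negY, hWa₁, hWa₂, hWa₃, hWa₄]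
    have h48 : (2*(48*b) + 0*(48*p^2) + 0 : ℚ) ≠ 0 := by
      intro h; apply hb; linarith
    field_simp
    ring
  have hx' : W.addX (48*p^2) (48*p^2) (W.slope (48*p^2) (48*p^2) (48*b) (48*b)) = 48*p^2 := by
    rw [WeierstrassCurve.Affine.addX, hL, hWa₁, hWa₂]
    ring
  have hy' : W.addY (48*p^2) (48*p^2) (48*b) (W.slope (48*p^2) (48*p^2) (48*b) (48*b)) =
      W.negY (48*p^2) (48*b) := by
    rw [WeierstrassCurve.Affine.addY, WeierstrassCurve.Affine.negAddY, hx',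
      WeierstrassCurve.Affine.negY, WeierstrassCurve.Affine.negY, hL, hWa₁, hWa₃]
    ring
  haveI : Fact (Nat.Prime 3) := ⟨by norm_num⟩
  apply addOrderOf_eq_prime
  · show (3 : ℕ) • _ = 0
    rw [show (3:ℕ) = 2 + 1 from rfl, succ_nsmul, two_nsmul,
      WeierstrassCurve.Affine.Point.add_self_of_Y_ne hy]
    exact WeierstrassCurve.Affine.Point.add_of_Y_eq hx' hy'
  · exact WeierstrassCurve.Affine.Point.some_ne_zero hP
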